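/- arXiv:2307.04042 — 2 statements merged into one kernel-verified Lean document; each statement's English description precedes it below -/
import Mathlib

section
/- Let P_X be a probability measure on [0,1]^d whose density is bounded below by c > 0. Let g : [0,1]^d → ℝ≥0 be continuous, h ∈ (0,1), p ∈ [1,∞], and Δ_h(x) := {x' ∈ [0,1]^d : ‖x−x'‖_p ≤ h}. Then E_{X∼P_X}[ sup_{x'∈Δ_h(X)} g(x') ] ≥ C · h^d · ‖g‖_∞, where C = c · Γ(1/p+1)^d / Γ(d/p+1) · 2^{-d} (a constant depending only on c, p, d accounting for boundary truncation). -/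
open MeasureTheory Set
open scoped ENNReal

/-- The `ℓ^p`-norm of a vector in `ℝ^d`, for `p ∈ [1, ∞]`. -/
noncomputable def lpNorm (d : ℕ) (p : ℝ≥0∞) (x : Fin d → ℝ) : ℝ :=
  if p = ⊤ then sSup (Set.range fun i => |x i|)
  else (∑ i, |x i| ^ p.toReal) ^ (1 / p.toReal)

/-- The adversarial neighborhood `Δ_h^p(x)`. -/
noncomputable def advNbhd (d : ℕ) (p : ℝ≥0∞) (h : ℝ) (x : Fin d → ℝ) :
    Set (Fin d → ℝ) :=
  {x' ∈ Set.Icc (0 : Fin d → ℝ) 1 | lpNorm d p (fun i => x i - x' i) ≤ h}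

/-- `1/p` as a real number, with the convention `1/∞ = 0`. -/
noncomputable def pInv (p : ℝ≥0∞) : ℝ := if p = ⊤ then 0 else 1 / p.toReal

lemma lpNorm_sub_comm (d : ℕ) (p : ℝ≥0∞) (a b : Fin d → ℝ) :
    lpNorm d p (fun i => a i - b i) = lpNorm d p (fun i => b i - a i) := by
  unfold _root_.lpNorm
  simp_rw [abs_sub_comm]

lemma flip_measurable (d : ℕ) (σ : Fin d → Bool) :
    Measurable (fun x : Fin d → ℝ => fun i => if σ i then x i else -x i) :=
  measurable_pi_lambda _ fun i => by
    by_cases hσ : σ i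
    · simpa [hσ] using (@measurable_pi_apply (Fin d) (fun _ => ℝ) _ i)
    · simp only [hσ, if_false, Bool.false_eq_true]
      exact (@measurable_pi_apply (Fin d) (fun _ => ℝ) _ i).neg

lemma flip_measurePreserving (d : ℕ) (σ : Fin d → Bool) :
    MeasurePreserving (fun x : Fin d → ℝ => fun i => if σ i then x i else -x i)
      volume volume := by
  refine ⟨flip_measurable d σ, ?_⟩
  have key : Measure.pi (fun _ : Fin d => (volume : Measure ℝ)) =
      Measure.map (fun x : Fin d → ℝ => fun i => if σ i then x i else -x i) volume := by
    refine Measure.pi_eq fun s hs => ?_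
    rw [Measure.map_apply (flip_measurable d σ) (MeasurableSet.univ_pi hs)]
    have hpre : (fun x : Fin d → ℝ => fun i => if σ i then x i else -x i) ⁻¹' (Set.univ.pi s)
        = Set.univ.pi (fun i => if σ i then s i else Neg.neg ⁻¹' (s i)) := by
      ext x
      simp only [Set.mem_preimage, Set.mem_pi, Set.mem_univ, forall_true_left, true_implies]
      refine forall_congr' fun i => ?_
      by_cases hσ : σ i <;> simp [hσ]
    rw [hpre, volume_pi_pi]
    refine Finset.prod_congr rfl fun i _ => ?_
    by_cases hσ : σ i
    · simp [hσ]
    · simp only [hσ, if_false, Bool.false_eq_true]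
      exact (Measure.measurePreserving_neg (volume : Measure ℝ)).measure_preimage
        (hs i).nullMeasurableSet
  rw [← key, ← volume_pi]

lemma abs_le_lpNorm {d : ℕ} {p : ℝ≥0∞} (hp : 1 ≤ p) (x : Fin d → ℝ) (i : Fin d) :
    |x i| ≤ lpNorm d p x := by
  unfold _root_.lpNorm
  split_ifs with hT
  · exact le_csSup (Set.finite_range _).bddAbove ⟨i, rfl⟩
  · have hq : 1 ≤ p.toReal := by
      rw [← ENNReal.toReal_one]
      exact ENNReal.toReal_mono hT hp
    have hq0 : (0:ℝ) < p.toReal := lt_of_lt_of_le one_pos hq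
    calc |x i| = (|x i| ^ p.toReal) ^ (1 / p.toReal) := by
          rw [← Real.rpow_mul (abs_nonneg _), mul_one_div_cancel hq0.ne', Real.rpow_one]
      _ ≤ _ := Real.rpow_le_rpow (Real.rpow_nonneg (abs_nonneg _) _)
            (Finset.single_le_sum (fun j _ => Real.rpow_nonneg (abs_nonneg _) _)
              (Finset.mem_univ i))
            (by positivity)

lemma continuous_sum_rpow (d : ℕ) {q : ℝ} (hq : 0 ≤ q) :
    Continuous fun x : Fin d → ℝ => (∑ i, |x i| ^ q) ^ (1/q) := by
  refine Continuous.rpow_const ?_ fun x => Or.inr (by positivity)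
  exact continuous_finset_sum _ fun i _ =>
    ((continuous_apply i).abs).rpow_const fun x => Or.inr hq

theorem adv_expectation_ge_hd_sup
    (d : ℕ) (p : ℝ≥0∞) (hp : 1 ≤ p) (c : ℝ) (hc : 0 < c)
    (P : Measure (Fin d → ℝ)) [IsProbabilityMeasure P]
    (hPcube : P (Set.Icc (0 : Fin d → ℝ) 1) = 1)
    (hdens : ∀ s : Set (Fin d → ℝ), MeasurableSet s →
      s ⊆ Set.Icc (0 : Fin d → ℝ) 1 → ENNReal.ofReal c * volume s ≤ P s)
    (g : (Fin d → ℝ) → ℝ) (hg : ContinuousOn g (Set.Icc (0 : Fin d → ℝ) 1))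
    (hg0 : ∀ x, 0 ≤ g x)
    (h : ℝ) (hh : h ∈ Set.Ioo (0 : ℝ) 1) :
    ENNReal.ofReal
        ((c * (Real.Gamma (pInv p + 1)) ^ d / Real.Gamma (d * pInv p + 1)
            * (2 : ℝ) ^ (-(d : ℤ)))
          * h ^ d * sSup (g '' Set.Icc (0 : Fin d → ℝ) 1)) ≤
      ∫⁻ x, ENNReal.ofReal (sSup (g '' advNbhd d p h x)) ∂P := by
  obtain ⟨hh0, hh1⟩ := hh
  have hcne : (Set.Icc (0 : Fin d → ℝ) 1).Nonempty := ⟨0, le_refl _, zero_le_one⟩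
  have hcomp : IsCompact (Set.Icc (0 : Fin d → ℝ) 1) := isCompact_Icc
  obtain ⟨x₀, hx₀, hmax⟩ := hcomp.exists_isMaxOn hcne hg
  set M := sSup (g '' Set.Icc (0 : Fin d → ℝ) 1) with hMdef
  have hM : M = g x₀ := by
    refine IsGreatest.csSup_eq ⟨Set.mem_image_of_mem g hx₀, ?_⟩
    rintro y ⟨z, hz, rfl⟩
    exact hmax hz
  have hM0 : 0 ≤ M := hM ▸ hg0 x₀
  have hbdd : BddAbove (g '' Set.Icc (0 : Fin d → ℝ) 1) :=
    (hcomp.image_of_continuousOn hg).bddAbove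
  -- positivity facts about the constant
  have hpInv0 : 0 ≤ pInv p := by
    unfold pInv; split_ifs
    · exact le_refl _
    · positivity
  have hG1 : 0 < Real.Gamma (pInv p + 1) := Real.Gamma_pos_of_pos (by linarith)
  have hG2 : 0 < Real.Gamma ((d:ℝ) * pInv p + 1) := Real.Gamma_pos_of_pos (by positivity)
  set K : ℝ := Real.Gamma (pInv p + 1) ^ d / Real.Gamma ((d:ℝ) * pInv p + 1) * (2:ℝ) ^ (-(d:ℤ))
    with hKdef
  have hK0 : 0 ≤ K := by
    apply mul_nonneg (div_nonneg (pow_nonneg hG1.le _) hG2.le)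
    positivity
  -- reduce to finding a good measurable subset
  suffices key : ∃ B₀ : Set (Fin d → ℝ), MeasurableSet B₀ ∧ B₀ ⊆ advNbhd d p h x₀ ∧
      ENNReal.ofReal (K * h ^ d) ≤ volume B₀ by
    obtain ⟨B₀, hB₀m, hB₀sub, hvol⟩ := key
    have hB₀cube : B₀ ⊆ Set.Icc (0 : Fin d → ℝ) 1 := fun x hx => (hB₀sub hx).1
    have hPB : ENNReal.ofReal c * volume B₀ ≤ P B₀ := hdens _ hB₀m hB₀cube
    have hpoint : ∀ x, B₀.indicator (fun _ => ENNReal.ofReal M) x ≤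
        ENNReal.ofReal (sSup (g '' advNbhd d p h x)) := by
      intro x
      by_cases hx : x ∈ B₀
      · rw [Set.indicator_of_mem hx]
        apply ENNReal.ofReal_le_ofReal
        have hx' := hB₀sub hx
        have hx₀mem : x₀ ∈ advNbhd d p h x := by
          refine ⟨hx₀, ?_⟩
          rw [lpNorm_sub_comm]
          exact hx'.2
        have hbdd' : BddAbove (g '' advNbhd d p h x) :=
          hbdd.mono (Set.image_mono (f := g) fun y hy => hy.1)
        rw [hM]
        exact le_csSup hbdd' (Set.mem_image_of_mem g hx₀mem)
      · simp [Set.indicator_of_notMem hx]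
    calc ENNReal.ofReal ((c * Real.Gamma (pInv p + 1) ^ d / Real.Gamma ((d:ℝ) * pInv p + 1)
            * (2:ℝ) ^ (-(d:ℤ))) * h ^ d * M)
        = ENNReal.ofReal M * (ENNReal.ofReal c * ENNReal.ofReal (K * h ^ d)) := by
          rw [← ENNReal.ofReal_mul hc.le, ← ENNReal.ofReal_mul hM0]
          congr 1
          rw [hKdef]; ring
      _ ≤ ENNReal.ofReal M * (ENNReal.ofReal c * volume B₀) := by
          gcongr
      _ ≤ ENNReal.ofReal M * P B₀ := by gcongr
      _ = ∫⁻ x in B₀, ENNReal.ofReal M ∂P := (setLIntegral_const _ _).symm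
      _ = ∫⁻ x, B₀.indicator (fun _ => ENNReal.ofReal M) x ∂P :=
          (lintegral_indicator hB₀m _).symm
      _ ≤ _ := lintegral_mono hpoint
  -- now construct B₀
  rcases Nat.eq_zero_or_pos d with hd0 | hd
  · subst hd0
    refine ⟨Set.univ, MeasurableSet.univ, fun x _ => ⟨⟨Pi.le_def.mpr fun i => i.elim0,
      Pi.le_def.mpr fun i => i.elim0⟩, ?_⟩, ?_⟩
    · unfold _root_.lpNorm
      split_ifs with hT
      · rw [Set.range_eq_empty, Real.sSup_empty]; exact hh0.le
      · have hq : 1 ≤ p.toReal := by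
          rw [← ENNReal.toReal_one]; exact ENNReal.toReal_mono hT hp
        have hq0 : (0:ℝ) < p.toReal := lt_of_lt_of_le one_pos hq
        rw [Finset.univ_eq_empty, Finset.sum_empty, Real.zero_rpow (one_div_ne_zero hq0.ne')]
        exact hh0.le
    · have hK1 : K = 1 := by rw [hKdef]; norm_num [Real.Gamma_one]
      have huniv : (Set.univ : Set (Fin 0 → ℝ)) = Set.Icc 0 1 := by
        ext x
        exact ⟨fun _ => ⟨Pi.le_def.mpr fun i => i.elim0, Pi.le_def.mpr fun i => i.elim0⟩,
          fun _ => trivial⟩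
      rw [huniv, Real.volume_Icc_pi, hK1]
      simp
  · haveI : Nonempty (Fin d) := ⟨⟨0, hd⟩⟩
    set σ : Fin d → Bool := fun i => decide (x₀ i + h/2 ≤ 1) with hσdef
    have hσtrue : ∀ i, σ i = true → x₀ i + h/2 ≤ 1 := by
      intro i hi; simpa [hσdef] using hi
    have hσfalse : ∀ i, σ i = false → 0 ≤ x₀ i - h/2 := by
      intro i hi
      have hni : ¬ (x₀ i + h/2 ≤ 1) := by simpa [hσdef] using hi
      have hx1 : x₀ i ≤ 1 := by simpa using hx₀.2 i
      linarith
    have hx0i : ∀ i, (0:ℝ) ≤ x₀ i := fun i => by simpa using hx₀.1 i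
    have hx1i : ∀ i, x₀ i ≤ 1 := fun i => by simpa using hx₀.2 i
    by_cases hpt : p = ⊤
    · subst hpt
      set a : Fin d → ℝ := fun i => if σ i then x₀ i else x₀ i - h/2 with ha
      set b : Fin d → ℝ := fun i => if σ i then x₀ i + h/2 else x₀ i with hb
      refine ⟨Set.Icc a b, measurableSet_Icc, ?_, ?_⟩
      · rintro x ⟨hax, hxb⟩
        have hbound : ∀ i, 0 ≤ x i ∧ x i ≤ 1 ∧ |x₀ i - x i| ≤ h/2 := by
          intro i
          have h1 : a i ≤ x i := hax i
          have h2 : x i ≤ b i := hxb i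
          rcases Bool.eq_false_or_eq_true (σ i) with hi | hi
          · have h3 := hσtrue i hi
            simp [ha, hb, hi] at h1 h2
            exact ⟨by linarith [hx0i i], by linarith, abs_le.mpr ⟨by linarith, by linarith⟩⟩
          · have h3 := hσfalse i hi
            simp [ha, hb, hi] at h1 h2
            exact ⟨by linarith, by linarith [hx1i i], abs_le.mpr ⟨by linarith, by linarith⟩⟩
        refine ⟨⟨Pi.le_def.mpr fun i => ?_, Pi.le_def.mpr fun i => ?_⟩, ?_⟩
        · simpa using (hbound i).1
        · simpa using (hbound i).2.1
        · rw [_root_.lpNorm, if_pos rfl]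
          refine Real.sSup_le ?_ hh0.le
          rintro y ⟨i, rfl⟩
          exact le_trans (hbound i).2.2 (by linarith)
      · have hab : ∀ i : Fin d, ENNReal.ofReal (b i - a i) = ENNReal.ofReal (h/2) := by
          intro i
          rcases Bool.eq_false_or_eq_true (σ i) with hi | hi
          · simp only [ha, hb]
            rw [if_pos hi, if_pos hi, show x₀ i + h/2 - x₀ i = h/2 by ring]
          · have hi' : ¬ (σ i = true) := by simp [hi]
            simp only [ha, hb]
            rw [if_neg hi', if_neg hi', show x₀ i - (x₀ i - h/2) = h/2 by ring]
        rw [Real.volume_Icc_pi, Finset.prod_congr rfl fun i _ => hab i, Finset.prod_const,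
          Finset.card_univ, Fintype.card_fin, ← ENNReal.ofReal_pow (by positivity)]
        apply ENNReal.ofReal_le_ofReal
        have hK : K = (2:ℝ) ^ (-(d:ℤ)) := by
          rw [hKdef]
          norm_num [pInv, Real.Gamma_one]
        rw [hK, zpow_neg, zpow_natCast, inv_mul_eq_div, div_pow]
    · have hq1 : 1 ≤ p.toReal := by
        rw [← ENNReal.toReal_one]; exact ENNReal.toReal_mono hpt hp
      have hq0 : (0:ℝ) < p.toReal := lt_of_lt_of_le one_pos hq1
      have hpInv : pInv p = 1 / p.toReal := by rw [pInv, if_neg hpt]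
      set ball : Set (Fin d → ℝ) := {x | (∑ i, |x i| ^ p.toReal) ^ (1/p.toReal) ≤ h/2}
        with hball
      set pos : Set (Fin d → ℝ) := {x | ∀ i, 0 ≤ x i} with hpos
      set flipSet : (Fin d → Bool) → Set (Fin d → ℝ) :=
        fun τ => {x | ∀ i, 0 ≤ (if τ i then x i else -x i)} with hflip
      have hballm : MeasurableSet ball :=
        measurableSet_le (continuous_sum_rpow d hq0.le).measurable measurable_const
      have hflipm : ∀ τ, MeasurableSet (flipSet τ) := by
        intro τ
        have heq : flipSet τ = ⋂ i, {x : Fin d → ℝ | 0 ≤ (if τ i then x i else -x i)} := by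
          ext x; simp [hflip, Set.mem_iInter]
        rw [heq]
        refine MeasurableSet.iInter fun i => ?_
        rcases Bool.eq_false_or_eq_true (τ i) with hi | hi
        · have heq2 : {x : Fin d → ℝ | 0 ≤ (if τ i then x i else -x i)}
              = {x : Fin d → ℝ | 0 ≤ x i} := by ext x; simp [hi]
          rw [heq2]
          exact measurableSet_le measurable_const
            (@measurable_pi_apply (Fin d) (fun _ => ℝ) _ i)
        · have heq2 : {x : Fin d → ℝ | 0 ≤ (if τ i then x i else -x i)}
              = {x : Fin d → ℝ | x i ≤ 0} := by ext x; simp [hi]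
          rw [heq2]
          exact measurableSet_le
            (@measurable_pi_apply (Fin d) (fun _ => ℝ) _ i) measurable_const
      have hflipvol : ∀ τ, volume (ball ∩ flipSet τ) = volume (ball ∩ pos) := by
        intro τ
        have hpre : (fun x : Fin d → ℝ => fun i => if τ i then x i else -x i) ⁻¹'
            (ball ∩ flipSet τ) = ball ∩ pos := by
          ext x
          have e1 : (∑ i, |(if τ i then x i else -x i)| ^ p.toReal)
              = ∑ i, |x i| ^ p.toReal := by
            refine Finset.sum_congr rfl fun i _ => ?_
            rcases Bool.eq_false_or_eq_true (τ i) with hi | hi <;> simp [hi]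
          simp only [Set.mem_preimage, Set.mem_inter_iff, hball, hflip, hpos,
            Set.mem_setOf_eq, e1]
          refine and_congr Iff.rfl (forall_congr' fun i => ?_)
          rcases Bool.eq_false_or_eq_true (τ i) with hi | hi <;> simp [hi]
        calc volume (ball ∩ flipSet τ)
            = volume ((fun x : Fin d → ℝ => fun i => if τ i then x i else -x i) ⁻¹'
                (ball ∩ flipSet τ)) :=
              ((flip_measurePreserving d τ).measure_preimage
                ((hballm.inter (hflipm τ)).nullMeasurableSet)).symm
          _ = volume (ball ∩ pos) := by rw [hpre]
      have hcover : ball ⊆ ⋃ τ : Fin d → Bool, (ball ∩ flipSet τ) := by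
        intro x hx
        refine Set.mem_iUnion.mpr ⟨fun i => decide (0 ≤ x i), hx, fun i => ?_⟩
        by_cases hxi : 0 ≤ x i
        · simp [hxi]
        · have hlt := lt_of_not_ge hxi
          simp [hxi]
          linarith
      have hballvol : volume ball ≤ (2:ℝ≥0∞)^d * volume (ball ∩ pos) := by
        calc volume ball ≤ ∑ τ : Fin d → Bool, volume (ball ∩ flipSet τ) :=
              le_trans (measure_mono hcover) (measure_iUnion_fintype_le _ _)
          _ = ∑ τ : Fin d → Bool, volume (ball ∩ pos) :=
              Finset.sum_congr rfl fun τ _ => hflipvol τ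
          _ = (2:ℝ≥0∞)^d * volume (ball ∩ pos) := by
              rw [Finset.sum_const, Finset.card_univ, Fintype.card_fun, Fintype.card_bool,
                Fintype.card_fin, nsmul_eq_mul]
              push_cast
              ring
      have hballval : volume ball = ENNReal.ofReal (h/2) ^ d *
          ENNReal.ofReal ((2 * Real.Gamma (1/p.toReal + 1)) ^ d
            / Real.Gamma ((d:ℝ)/p.toReal + 1)) := by
        rw [hball]
        simpa [Fintype.card_fin] using
          MeasureTheory.volume_sum_rpow_le (Fin d) hq1 (h/2)
      have hposvol : ENNReal.ofReal (K * h ^ d) ≤ volume (ball ∩ pos) := by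
        have heq : (2:ℝ≥0∞)^d * ENNReal.ofReal (K * h^d) = volume ball := by
          rw [hballval, ← ENNReal.ofReal_pow (by positivity : (0:ℝ) ≤ h/2),
            ← ENNReal.ofReal_mul (by positivity)]
          have h2 : ((2:ℝ≥0∞)^d) = ENNReal.ofReal ((2:ℝ)^d) := by
            rw [ENNReal.ofReal_pow (by norm_num : (0:ℝ) ≤ 2)]
            norm_num
          rw [h2, ← ENNReal.ofReal_mul (by positivity)]
          congr 1
          rw [hKdef, hpInv, zpow_neg, zpow_natCast, mul_one_div]
          field_simp
          rw [← mul_pow, ← mul_pow]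
          congr 1
          ring
        have hle : (2:ℝ≥0∞)^d * ENNReal.ofReal (K * h^d)
            ≤ (2:ℝ≥0∞)^d * volume (ball ∩ pos) := heq ▸ hballvol
        exact (ENNReal.mul_le_mul_iff_right (pow_ne_zero _ (by norm_num : (2:ℝ≥0∞) ≠ 0)) (ENNReal.pow_ne_top (by norm_num : (2:ℝ≥0∞) ≠ ⊤))).mp hle
      set W : Set (Fin d → ℝ) := {x | (∑ i, |x i - x₀ i| ^ p.toReal) ^ (1/p.toReal) ≤ h/2 ∧
          ∀ i, 0 ≤ (if σ i then x i - x₀ i else -(x i - x₀ i))} with hWdef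
      have hWpre : W = (fun x : Fin d → ℝ => -x₀ + x) ⁻¹' (ball ∩ flipSet σ) := by
        ext x
        simp only [hWdef, hball, hflip, Set.mem_preimage, Set.mem_inter_iff, Set.mem_setOf_eq,
          Pi.add_apply, Pi.neg_apply, neg_add_eq_sub, Pi.sub_apply]
      have hWm : MeasurableSet W := by
        rw [hWpre]
        exact (hballm.inter (hflipm σ)).preimage (measurable_id.const_add (-x₀))
      have hWvol : volume W = volume (ball ∩ pos) := by
        rw [hWpre, measure_preimage_add, hflipvol σ]
      have hWsub : W ⊆ advNbhd d p h x₀ := by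
        rintro x ⟨hx1, hx2⟩
        have hco : ∀ i, |x i - x₀ i| ≤ h/2 := by
          intro i
          refine le_trans ?_ hx1
          have hb := abs_le_lpNorm (d := d) (p := p) hp (fun j => x j - x₀ j) i
          rwa [_root_.lpNorm, if_neg hpt] at hb
        refine ⟨⟨Pi.le_def.mpr fun i => ?_, Pi.le_def.mpr fun i => ?_⟩, ?_⟩
        · simp only [Pi.zero_apply]
          have h2 := hx2 i; have hci := abs_le.mp (hco i)
          rcases Bool.eq_false_or_eq_true (σ i) with hi | hi
          · simp [hi] at h2
            linarith [hx0i i]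
          · have h3 := hσfalse i hi
            simp [hi] at h2
            linarith [hci.1]
        · simp only [Pi.one_apply]
          have h2 := hx2 i; have hci := abs_le.mp (hco i)
          rcases Bool.eq_false_or_eq_true (σ i) with hi | hi
          · have h3 := hσtrue i hi
            simp [hi] at h2
            linarith [hci.2]
          · simp [hi] at h2
            linarith [hx1i i]
        · rw [_root_.lpNorm, if_neg hpt]
          have habs : (∑ i, |x₀ i - x i| ^ p.toReal) = ∑ i, |x i - x₀ i| ^ p.toReal := by
            simp_rw [abs_sub_comm]
          rw [habs]
          exact le_trans hx1 (by linarith)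
      exact ⟨W, hWm, hWsub, by rw [hWvol]; exact hposvol⟩
end

section
/- Let P_X be a probability measure on [0,1]^d with density bounded below by c > 0, and let f, f* : [0,1]^d → ℝ be bounded continuous functions. Define the adversarial norm ‖g‖²_{P_X,Δ} := E_{X∼P_X}[ sup_{x'∈Δ_h^p(X)} g(x')² ] where Δ_h^p(x) = {x' ∈ [0,1]^d : ‖x−x'‖_p ≤ h}. Then ‖f − f*‖²_{P_X,Δ} ≥ C_{c,p,d} h^d ‖f − f*‖²_∞ for a constant C_{c,p,d} > 0 depending only on c, p, d. -/
open MeasureTheory Set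
open scoped ENNReal

/-- If every coordinate is at most `h / (d+1)` in absolute value, the `ℓ^p` norm is at most `h`. -/
lemma lpNorm_le_aux {d : ℕ} {p : ℝ≥0∞} (hp : 1 ≤ p) {x : Fin d → ℝ} {h : ℝ}
    (hh : 0 ≤ h) (hb : ∀ i, |x i| ≤ h / ((d : ℝ) + 1)) : lpNorm d p x ≤ h := by
  have hd1 : (1 : ℝ) ≤ (d : ℝ) + 1 := by
    have : (0 : ℝ) ≤ (d : ℝ) := Nat.cast_nonneg d
    linarith
  have hrh : h / ((d : ℝ) + 1) ≤ h := div_le_self hh hd1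
  unfold _root_.lpNorm
  by_cases hptop : p = ⊤
  · rw [if_pos hptop]
    exact Real.sSup_le (by rintro y ⟨i, rfl⟩; exact (hb i).trans hrh) hh
  · rw [if_neg hptop]
    set q : ℝ := p.toReal with hq
    have hq1 : 1 ≤ q := by
      rw [hq, ← ENNReal.toReal_one]
      exact ENNReal.toReal_mono hptop hp
    have hq0 : 0 < q := lt_of_lt_of_le one_pos hq1
    have hd0 : (0 : ℝ) < (d : ℝ) + 1 := lt_of_lt_of_le one_pos hd1
    have hterm : ∀ i : Fin d, |x i| ^ q ≤ (h / ((d : ℝ) + 1)) ^ q := fun i =>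
      Real.rpow_le_rpow (abs_nonneg _) (hb i) hq0.le
    have hsum : ∑ i, |x i| ^ q ≤ (d : ℝ) * (h / ((d : ℝ) + 1)) ^ q := by
      calc ∑ i, |x i| ^ q ≤ ∑ _i : Fin d, (h / ((d : ℝ) + 1)) ^ q :=
            Finset.sum_le_sum fun i _ => hterm i
        _ = (d : ℝ) * (h / ((d : ℝ) + 1)) ^ q := by
            rw [Finset.sum_const, Finset.card_univ, Fintype.card_fin, nsmul_eq_mul]
    have hdpow : (d : ℝ) ≤ ((d : ℝ) + 1) ^ q := by
      have h2 : ((d : ℝ) + 1) ^ (1 : ℝ) ≤ ((d : ℝ) + 1) ^ q :=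
        Real.rpow_le_rpow_of_exponent_le hd1 hq1
      rw [Real.rpow_one] at h2
      linarith
    have hsum2 : ∑ i, |x i| ^ q ≤ h ^ q := by
      have hdiv : (h / ((d : ℝ) + 1)) ^ q = h ^ q / ((d : ℝ) + 1) ^ q :=
        Real.div_rpow hh hd0.le q
      have hpos : (0 : ℝ) < ((d : ℝ) + 1) ^ q := Real.rpow_pos_of_pos hd0 q
      have hhq : (0 : ℝ) ≤ h ^ q := Real.rpow_nonneg hh q
      have : (d : ℝ) * (h ^ q / ((d : ℝ) + 1) ^ q) ≤ h ^ q := by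
        rw [mul_div_assoc', div_le_iff₀ hpos]
        nlinarith [mul_le_mul_of_nonneg_right hdpow hhq]
      calc ∑ i, |x i| ^ q ≤ (d : ℝ) * (h / ((d : ℝ) + 1)) ^ q := hsum
        _ = (d : ℝ) * (h ^ q / ((d : ℝ) + 1) ^ q) := by rw [hdiv]
        _ ≤ h ^ q := this
    have hsumnn : (0 : ℝ) ≤ ∑ i, |x i| ^ q :=
      Finset.sum_nonneg fun i _ => Real.rpow_nonneg (abs_nonneg _) q
    calc (∑ i, |x i| ^ q) ^ (1 / q) ≤ (h ^ q) ^ (1 / q) :=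
          Real.rpow_le_rpow hsumnn hsum2 (by positivity)
      _ = h := by
          rw [← Real.rpow_mul hh, mul_one_div, div_self hq0.ne', Real.rpow_one]

theorem adv_norm_lower_bounds_sup_norm
    (d : ℕ) (p : ℝ≥0∞) (hp : 1 ≤ p) (c : ℝ) (hc : 0 < c) :
    ∃ C > (0 : ℝ), ∀ h : ℝ, h ∈ Set.Ioo (0 : ℝ) 1 →
      ∀ P : Measure (Fin d → ℝ), IsProbabilityMeasure P →
        P (Set.Icc (0 : Fin d → ℝ) 1) = 1 →
        (∀ s : Set (Fin d → ℝ), MeasurableSet s →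
          s ⊆ Set.Icc (0 : Fin d → ℝ) 1 → ENNReal.ofReal c * volume s ≤ P s) →
        ∀ f fs : (Fin d → ℝ) → ℝ,
          ContinuousOn f (Set.Icc (0 : Fin d → ℝ) 1) →
          ContinuousOn fs (Set.Icc (0 : Fin d → ℝ) 1) →
          ENNReal.ofReal
              (C * h ^ d * (sSup ((fun x => |f x - fs x|) '' Set.Icc (0 : Fin d → ℝ) 1)) ^ 2) ≤
            ∫⁻ x, ENNReal.ofReal
                (sSup ((fun x' => (f x' - fs x') ^ 2) '' advNbhd d p h x)) ∂P := by
  have hd0 : (0 : ℝ) < (d : ℝ) + 1 := by positivity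
  refine ⟨c / ((d : ℝ) + 1) ^ d, by positivity, ?_⟩
  rintro h ⟨hh0, hh1⟩ P hPprob hPcube hPc f fs hf hfs
  set Q : Set (Fin d → ℝ) := Set.Icc 0 1 with hQdef
  have hQne : Q.Nonempty := ⟨0, le_refl _, zero_le_one⟩
  have hQcomp : IsCompact Q := isCompact_Icc
  have hcont : ContinuousOn (fun x => |f x - fs x|) Q := (hf.sub hfs).abs
  obtain ⟨x₀, hx₀Q, hx₀max⟩ := hQcomp.exists_isMaxOn hQne hcont
  set M : ℝ := sSup ((fun x => |f x - fs x|) '' Q) with hMdef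
  have hMx₀ : M = |f x₀ - fs x₀| := by
    apply le_antisymm
    · exact csSup_le (hQne.image _) (by rintro y ⟨x, hx, rfl⟩; exact hx₀max hx)
    · exact le_csSup (hQcomp.bddAbove_image hcont) ⟨x₀, hx₀Q, rfl⟩
  -- the small cube S
  set r : ℝ := h / ((d : ℝ) + 1) with hrdef
  have hr0 : 0 < r := by positivity
  have hr1 : r ≤ 1 := le_trans (div_le_self hh0.le (by linarith [Nat.cast_nonneg (α := ℝ) d])) hh1.le
  set S : Set (Fin d → ℝ) :=
    Q ∩ Set.Icc (fun i => x₀ i - r) (fun i => x₀ i + r) with hSdef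
  have hSmeas : MeasurableSet S := measurableSet_Icc.inter measurableSet_Icc
  have hSsub : S ⊆ Q := inter_subset_left
  -- factor-wise volume lower bound
  have hfac : ∀ i : Fin d,
      r ≤ ((1 : Fin d → ℝ) ⊓ fun i => x₀ i + r) i - ((0 : Fin d → ℝ) ⊔ fun i => x₀ i - r) i := by
    intro i
    have h0 : (0 : ℝ) ≤ x₀ i := hx₀Q.1 i
    have h1 : x₀ i ≤ 1 := hx₀Q.2 i
    simp only [Pi.inf_apply, Pi.sup_apply, Pi.one_apply, Pi.zero_apply]
    have ha : (0 : ℝ) ⊔ (x₀ i - r) ≤ 1 - r := sup_le (by linarith) (by linarith)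
    have hb : (0 : ℝ) ⊔ (x₀ i - r) ≤ x₀ i := sup_le h0 (by linarith)
    have hmin : (0 : ℝ) ⊔ (x₀ i - r) + r ≤ 1 ⊓ (x₀ i + r) :=
      le_inf (by linarith) (by linarith)
    linarith
  have hvolS : ENNReal.ofReal (r ^ d) ≤ volume S := by
    have hSeq : S = Set.Icc ((0 : Fin d → ℝ) ⊔ fun i => x₀ i - r)
        ((1 : Fin d → ℝ) ⊓ fun i => x₀ i + r) := by
      rw [hSdef, hQdef, Set.Icc_inter_Icc]
    rw [hSeq, Real.volume_Icc_pi, ENNReal.ofReal_pow hr0.le]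
    calc (ENNReal.ofReal r) ^ d = ∏ _i : Fin d, ENNReal.ofReal r := by
          rw [Finset.prod_const, Finset.card_univ, Fintype.card_fin]
      _ ≤ ∏ i, ENNReal.ofReal
            (((1 : Fin d → ℝ) ⊓ fun i => x₀ i + r) i - ((0 : Fin d → ℝ) ⊔ fun i => x₀ i - r) i) :=
          Finset.prod_le_prod (fun _ _ => zero_le)
            (fun i _ => ENNReal.ofReal_le_ofReal (hfac i))
  -- bound on the square over the cube
  have hbdd : ∀ x' ∈ Q, (f x' - fs x') ^ 2 ≤ M ^ 2 := by
    intro x' hx'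
    have h1 : |f x' - fs x'| ≤ M := hMx₀ ▸ hx₀max hx'
    calc (f x' - fs x') ^ 2 = |f x' - fs x'| ^ 2 := (sq_abs _).symm
      _ ≤ M ^ 2 := pow_le_pow_left₀ (abs_nonneg _) h1 2
  -- pointwise lower bound on S
  have hpt : ∀ x ∈ S,
      ENNReal.ofReal (M ^ 2) ≤
        ENNReal.ofReal (sSup ((fun x' => (f x' - fs x') ^ 2) '' advNbhd d p h x)) := by
    intro x hx
    apply ENNReal.ofReal_le_ofReal
    have habs : ∀ i, |x i - x₀ i| ≤ r := by
      intro i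
      have h1 : x₀ i - r ≤ x i := hx.2.1 i
      have h2 : x i ≤ x₀ i + r := hx.2.2 i
      exact abs_le.mpr ⟨by linarith, by linarith⟩
    have hmem : x₀ ∈ advNbhd d p h x := by
      refine ⟨hx₀Q, lpNorm_le_aux hp hh0.le ?_⟩
      intro i
      exact (hrdef ▸ habs i)
    have hbdd' : BddAbove ((fun x' => (f x' - fs x') ^ 2) '' advNbhd d p h x) := by
      refine ⟨M ^ 2, ?_⟩
      rintro y ⟨x', hx', rfl⟩
      exact hbdd x' hx'.1
    calc M ^ 2 = (f x₀ - fs x₀) ^ 2 := by rw [hMx₀, sq_abs]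
      _ ≤ _ := le_csSup hbdd' ⟨x₀, hmem, rfl⟩
  -- put it together
  have hCr : c / ((d : ℝ) + 1) ^ d * h ^ d * M ^ 2 = M ^ 2 * (c * r ^ d) := by
    rw [hrdef, div_pow]
    field_simp
  calc ENNReal.ofReal (c / ((d : ℝ) + 1) ^ d * h ^ d * M ^ 2)
      = ENNReal.ofReal (M ^ 2) * (ENNReal.ofReal c * ENNReal.ofReal (r ^ d)) := by
        rw [hCr, ENNReal.ofReal_mul (sq_nonneg M), ENNReal.ofReal_mul hc.le]
    _ ≤ ENNReal.ofReal (M ^ 2) * (ENNReal.ofReal c * volume S) := by gcongr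
    _ ≤ ENNReal.ofReal (M ^ 2) * P S := by
        gcongr
        exact hPc S hSmeas hSsub
    _ = ∫⁻ x, S.indicator (fun _ => ENNReal.ofReal (M ^ 2)) x ∂P :=
        (lintegral_indicator_const hSmeas _).symm
    _ ≤ ∫⁻ x, ENNReal.ofReal (sSup ((fun x' => (f x' - fs x') ^ 2) '' advNbhd d p h x)) ∂P := by
        apply lintegral_mono
        intro x
        by_cases hx : x ∈ S
        · rw [Set.indicator_of_mem hx]; exact hpt x hx
        · rw [Set.indicator_of_notMem hx]; exact zero_le
end
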